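/- Let $d\ge 1$ and $\lambda_0,\lambda_1,\ldots,\lambda_d \in \mathbb{R}\setminus\{0\}$. The $d\times d$ matrix $G$ with entries $G_{ij} = 1/\lambda_0 + \delta_{ij}/\lambda_i$ is positive definite if and only if either (A) all of $\lambda_0,\lambda_1,\ldots,\lambda_d$ are positive, or (B) exactly one of $\lambda_0,\lambda_1,\ldots,\lambda_d$ is negative, all others are positive, and $\lambda_0+\lambda_1+\cdots+\lambda_d < 0$. -/

import Mathlib

open Finset

private theorem quadform_aux (d : ℕ) (lam0 : ℝ) (lam x : Fin d → ℝ) :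
    dotProduct x (Matrix.mulVec ((fun i j : Fin d => 1 / lam0 + if i = j then 1 / lam i else 0) :
        Matrix (Fin d) (Fin d) ℝ) x)
    = (∑ i, x i)^2 / lam0 + ∑ i, (x i)^2 / lam i := by
  simp only [dotProduct, Matrix.mulVec, dotProduct, add_mul, mul_add,
    Finset.sum_add_distrib, ite_mul, zero_mul, Finset.sum_ite_eq, Finset.mem_univ, if_true]
  rw [← Finset.sum_mul, ← Finset.mul_sum]
  ring_nf

private theorem wCS_aux {ι : Type*} (s : Finset ι) (w y : ι → ℝ)
    (hw : ∀ i ∈ s, 0 < w i) (hne : s.Nonempty) :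
    (∑ i ∈ s, y i)^2 ≤ (∑ i ∈ s, w i) * ∑ i ∈ s, (y i)^2 / w i := by
  have hpos : 0 < ∑ i ∈ s, w i := Finset.sum_pos hw hne
  have h := Finset.sq_sum_div_le_sum_sq_div s y hw
  rw [div_le_iff₀ hpos] at h
  calc (∑ i ∈ s, y i)^2 ≤ (∑ i ∈ s, (y i)^2 / w i) * ∑ i ∈ s, w i := h
    _ = _ := mul_comm _ _

/-- The matrix `G_{ij} = 1/λ₀ + δ_{ij}/λ_i` is positive definite iff either all
`λ₀,λ₁,…,λ_d` are positive, or exactly one of them is negative, the others are positive,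
and `λ₀ + λ₁ + ⋯ + λ_d < 0`. -/
theorem orthocentric_matrix_posDef_iff (d : ℕ) (hd : 1 ≤ d)
    (lam0 : ℝ) (lam : Fin d → ℝ) (h0 : lam0 ≠ 0) (h : ∀ i, lam i ≠ 0) :
    (Matrix.PosDef (fun i j : Fin d =>
        1 / lam0 + if i = j then 1 / lam i else 0)) ↔
      ((0 < lam0 ∧ ∀ i, 0 < lam i) ∨
        (((lam0 < 0 ∧ ∀ i, 0 < lam i) ∨
            (∃ i, lam i < 0 ∧ 0 < lam0 ∧ ∀ j, j ≠ i → 0 < lam j)) ∧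
          lam0 + ∑ i, lam i < 0)) := by
  have i₀ : Fin d := ⟨0, hd⟩
  have hne : (univ : Finset (Fin d)).Nonempty := ⟨i₀, mem_univ _⟩
  constructor
  · intro hpd
    have key : ∀ x : Fin d → ℝ, x ≠ 0 →
        0 < (∑ i, x i)^2 / lam0 + ∑ i, (x i)^2 / lam i := by
      intro x hx
      have := hpd.dotProduct_mulVec_pos hx
      rwa [star_trivial, quadform_aux d lam0 lam x] at this
    -- single test vector: 0 < 1/λ0 + 1/λᵢ
    have posd : ∀ i : Fin d, 0 < 1 / lam0 + 1 / lam i := by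
      intro i
      have hx : (Pi.single i 1 : Fin d → ℝ) ≠ 0 := by
        intro hc
        have := congrFun hc i
        simp at this
      have := key (Pi.single i 1) hx
      have h1 : ∑ j, (Pi.single i 1 : Fin d → ℝ) j = 1 := by simp
      have h2 : ∑ j, ((Pi.single i 1 : Fin d → ℝ) j)^2 / lam j = 1 / lam i := by
        rw [Finset.sum_eq_single i]
        · simp
        · intro j _ hj; simp [Pi.single_apply, hj]
        · simp
      rw [h1, h2] at this
      simpa using this
    -- pair test vector: 0 < 1/λᵢ + 1/λⱼ for i ≠ j
    have pair : ∀ i j : Fin d, i ≠ j → 0 < 1 / lam i + 1 / lam j := by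
      intro i j hij
      set x : Fin d → ℝ := fun k => if k = i then 1 else if k = j then -1 else 0 with hxdef
      have hx : x ≠ 0 := by
        intro hc
        have := congrFun hc i
        simp [hxdef] at this
      have h1 : ∑ k, x k = 0 := by
        rw [show (fun k => if k = i then (1:ℝ) else if k = j then -1 else 0)
            = (fun k => (if k = i then (1:ℝ) else 0) + (if k = j then -1 else 0)) from ?_] at hxdef
        · rw [hxdef]
          simp [Finset.sum_add_distrib]
        · funext k
          rcases eq_or_ne k i with rfl | hk <;> simp [hij, Ne.symm, *]
      have h2 : ∑ k, (x k)^2 / lam k = 1 / lam i + 1 / lam j := by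
        rw [show ∑ k, (x k)^2 / lam k
            = ∑ k, ((if k = i then 1 / lam i else 0) + (if k = j then 1 / lam j else 0)) from ?_]
        · simp [Finset.sum_add_distrib]
        · refine Finset.sum_congr rfl fun k _ => ?_
          rcases eq_or_ne k i with rfl | hki
          · simp [hxdef, hij, Ne.symm hij]
          · rcases eq_or_ne k j with rfl | hkj
            · simp [hxdef, hki]
            · simp [hxdef, hki, hkj]
      have := key x hx
      rw [h1, h2] at this
      simpa using this
    rcases h0.lt_or_gt with hneg0 | hpos0
    · -- λ0 < 0 : all λᵢ > 0 and sum < 0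
      have hall : ∀ i, 0 < lam i := by
        intro i
        rcases (h i).lt_or_gt with hi | hi
        · exfalso
          have := posd i
          have h1 : 1 / lam0 < 0 := one_div_neg.2 hneg0
          have h2 : 1 / lam i < 0 := one_div_neg.2 hi
          linarith
        · exact hi
      have hS : 0 < ∑ i, lam i := Finset.sum_pos (fun i _ => hall i) hne
      have hxl : lam ≠ 0 := by
        intro hc; exact h i₀ (congrFun hc i₀)
      have hk := key lam hxl
      have hterm : ∑ i, (lam i)^2 / lam i = ∑ i, lam i := by
        refine Finset.sum_congr rfl fun i _ => ?_
        rw [sq, mul_div_assoc, div_self (h i), mul_one]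
      rw [hterm] at hk
      set S := ∑ i, lam i
      have heq : S^2 / lam0 * lam0 = S^2 := div_mul_cancel₀ _ h0
      refine Or.inr ⟨Or.inl ⟨hneg0, hall⟩, ?_⟩
      nlinarith [hk, heq, hS, hneg0]
    · -- λ0 > 0
      by_cases hall : ∀ i, 0 < lam i
      · exact Or.inl ⟨hpos0, hall⟩
      · push_neg at hall
        obtain ⟨k, hk⟩ := hall
        have hkneg : lam k < 0 := lt_of_le_of_ne hk (h k)
        have hothers : ∀ j, j ≠ k → 0 < lam j := by
          intro j hjk
          rcases (h j).lt_or_gt with hj | hj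
          · exfalso
            have := pair k j (Ne.symm hjk)
            have h1 : 1 / lam k < 0 := one_div_neg.2 hkneg
            have h2 : 1 / lam j < 0 := one_div_neg.2 hj
            linarith
          · exact hj
        set μ := lam0 + ∑ j ∈ univ.erase k, lam j with hμdef
        have hμpos : 0 < μ := by
          have : 0 ≤ ∑ j ∈ univ.erase k, lam j :=
            Finset.sum_nonneg fun j hj => (hothers j (Finset.mem_erase.1 hj).1).le
          linarith
        set x : Fin d → ℝ := fun j => if j = k then -μ else lam j with hxdef
        have hx : x ≠ 0 := by
          intro hc
          have := congrFun hc k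
          simp [hxdef] at this
          linarith
        have hsplit : ∀ g : Fin d → ℝ, ∑ j, g j = g k + ∑ j ∈ univ.erase k, g j :=
          fun g => (Finset.add_sum_erase _ g (mem_univ k)).symm
        have h1 : ∑ j, x j = -lam0 := by
          rw [hsplit x]
          have : ∑ j ∈ univ.erase k, x j = ∑ j ∈ univ.erase k, lam j := by
            refine Finset.sum_congr rfl fun j hj => ?_
            simp [hxdef, (Finset.mem_erase.1 hj).1]
          rw [this]
          simp [hxdef, hμdef]
          ring
        have h2 : ∑ j, (x j)^2 / lam j = μ^2 / lam k + (μ - lam0) := by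
          rw [hsplit (fun j => (x j)^2 / lam j)]
          have e1 : (x k)^2 / lam k = μ^2 / lam k := by simp [hxdef]
          have e2 : ∑ j ∈ univ.erase k, (x j)^2 / lam j = ∑ j ∈ univ.erase k, lam j := by
            refine Finset.sum_congr rfl fun j hj => ?_
            have hjk := (Finset.mem_erase.1 hj).1
            simp only [hxdef, if_neg hjk]
            rw [sq, mul_div_assoc, div_self (h j), mul_one]
          rw [e1, e2]
          simp [hμdef]
        have hkx := key x hx
        rw [h1, h2] at hkx
        have heq : μ^2 / lam k * lam k = μ^2 := div_mul_cancel₀ _ (h k)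
        have hsum : lam0 + ∑ i, lam i = μ + lam k := by
          rw [hsplit lam, hμdef]; ring
        refine Or.inr ⟨Or.inr ⟨k, hkneg, hpos0, hothers⟩, ?_⟩
        rw [hsum]
        have hq : (-lam0)^2 / lam0 = lam0 := by
          rw [neg_sq, sq, mul_div_assoc, div_self h0, mul_one]
        rw [hq] at hkx
        nlinarith [hkx, heq, hμpos, hkneg]
  · -- backward direction
    intro hcond
    refine Matrix.posDef_iff_dotProduct_mulVec.2 ⟨?_, ?_⟩
    · -- Hermitian
      refine Matrix.IsHermitian.ext fun i j => ?_
      simp only [star_trivial]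
      rcases eq_or_ne i j with rfl | hij
      · simp
      · simp [hij, Ne.symm hij]
    intro x hx
    rw [star_trivial, quadform_aux d lam0 lam x]
    obtain ⟨i₁, hi₁⟩ := Function.ne_iff.1 hx
    have hi₁' : x i₁ ≠ 0 := by simpa using hi₁
    rcases hcond with ⟨hpos0, hall⟩ | ⟨hB, hsum⟩
    · -- all positive
      have hT : 0 < ∑ i, (x i)^2 / lam i := by
        refine Finset.sum_pos' (fun i _ => div_nonneg (sq_nonneg _) (hall i).le)
          ⟨i₁, mem_univ _, div_pos (by positivity) (hall i₁)⟩
      have : 0 ≤ (∑ i, x i)^2 / lam0 := div_nonneg (sq_nonneg _) hpos0.le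
      linarith
    rcases hB with ⟨hneg0, hall⟩ | ⟨k, hkneg, hpos0, hothers⟩
    · -- λ0 < 0, all λᵢ > 0, sum < 0
      have hS : 0 < ∑ i, lam i := Finset.sum_pos (fun i _ => hall i) hne
      have hT : 0 < ∑ i, (x i)^2 / lam i := by
        refine Finset.sum_pos' (fun i _ => div_nonneg (sq_nonneg _) (hall i).le)
          ⟨i₁, mem_univ _, div_pos (by positivity) (hall i₁)⟩
      have hcs : (∑ i, x i)^2 ≤ (∑ i, lam i) * ∑ i, (x i)^2 / lam i :=
        wCS_aux univ lam x (fun i _ => hall i) hne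
      have heq : (∑ i, x i)^2 / lam0 * lam0 = (∑ i, x i)^2 := div_mul_cancel₀ _ h0
      nlinarith [hcs, heq, hS, hT, hneg0, hsum]
    · -- one negative among lam
      set s := ∑ i, x i with hsdef
      set μ := lam0 + ∑ j ∈ univ.erase k, lam j with hμdef
      have hsplit : ∀ g : Fin d → ℝ, ∑ j, g j = g k + ∑ j ∈ univ.erase k, g j :=
        fun g => (Finset.add_sum_erase _ g (mem_univ k)).symm
      have hμpos : 0 < μ := by
        have : 0 ≤ ∑ j ∈ univ.erase k, lam j :=
          Finset.sum_nonneg fun j hj => (hothers j (Finset.mem_erase.1 hj).1).le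
        linarith
      have hμlt : μ + lam k < 0 := by
        have : lam0 + ∑ i, lam i = μ + lam k := by rw [hsplit lam, hμdef]; ring
        linarith [this ▸ hsum]
      -- weighted CS over modified sequences
      set w : Fin d → ℝ := fun j => if j = k then lam0 else lam j with hwdef
      set y : Fin d → ℝ := fun j => if j = k then s else -(x j) with hydef
      have hwpos : ∀ j ∈ (univ : Finset (Fin d)), 0 < w j := by
        intro j _
        rcases eq_or_ne j k with rfl | hj
        · simpa [hwdef] using hpos0
        · simpa [hwdef, hj] using hothers j hj
      have hysum : ∑ j, y j = x k := by
        rw [hsplit y]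
        have e : ∑ j ∈ univ.erase k, y j = ∑ j ∈ univ.erase k, (-(x j)) := by
          refine Finset.sum_congr rfl fun j hj => ?_
          simp [hydef, (Finset.mem_erase.1 hj).1]
        rw [e, Finset.sum_neg_distrib]
        have : ∑ j ∈ univ.erase k, x j = s - x k := by
          rw [hsdef, hsplit x]; ring
        rw [this]
        simp [hydef]
      have hwsum : ∑ j, w j = μ := by
        rw [hsplit w, hμdef]
        congr 1
        · simp [hwdef]
        · refine Finset.sum_congr rfl fun j hj => ?_
          simp [hwdef, (Finset.mem_erase.1 hj).1]
      set T := ∑ j, (y j)^2 / w j with hTdef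
      have hTval : T = s^2 / lam0 + ∑ j ∈ univ.erase k, (x j)^2 / lam j := by
        rw [hTdef, hsplit (fun j => (y j)^2 / w j)]
        congr 1
        · simp [hydef, hwdef]
        · refine Finset.sum_congr rfl fun j hj => ?_
          have hjk := (Finset.mem_erase.1 hj).1
          simp [hydef, hwdef, hjk]
      have hcs : (x k)^2 ≤ μ * T := by
        have := wCS_aux univ w y hwpos hne
        rw [hysum, hwsum] at this; exact this
      have hTnonneg : 0 ≤ T := by
        rw [hTval]
        have h1 : 0 ≤ s^2 / lam0 := div_nonneg (sq_nonneg _) hpos0.le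
        have h2 : 0 ≤ ∑ j ∈ univ.erase k, (x j)^2 / lam j :=
          Finset.sum_nonneg fun j hj =>
            div_nonneg (sq_nonneg _) (hothers j (Finset.mem_erase.1 hj).1).le
        linarith
      -- goal: 0 < s^2/lam0 + ∑ i, (x i)^2 / lam i = T + (x k)^2 / lam k
      have hgoal : s^2 / lam0 + ∑ i, (x i)^2 / lam i = T + (x k)^2 / lam k := by
        rw [hTval, hsplit (fun i => (x i)^2 / lam i)]
        ring
      rw [hgoal]
      rcases (eq_or_lt_of_le hTnonneg).imp Eq.symm id with hT0 | hTpos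
      · -- T = 0 forces x = 0, contradiction
        exfalso
        have hxk : (x k)^2 ≤ 0 := by rw [hT0, mul_zero] at hcs; exact hcs
        have hxk0 : x k = 0 := by nlinarith [sq_nonneg (x k)]
        have hrest : ∀ j ∈ univ.erase k, (x j)^2 / lam j = 0 := by
          have h1 : 0 ≤ s^2 / lam0 := div_nonneg (sq_nonneg _) hpos0.le
          have h2 : ∀ j ∈ univ.erase k, 0 ≤ (x j)^2 / lam j := fun j hj =>
            div_nonneg (sq_nonneg _) (hothers j (Finset.mem_erase.1 hj).1).le
          have hz : ∑ j ∈ univ.erase k, (x j)^2 / lam j = 0 := by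
            rw [hTval] at hT0
            have := Finset.sum_nonneg h2
            linarith
          exact (Finset.sum_eq_zero_iff_of_nonneg h2).1 hz
        apply hx
        funext j
        rcases eq_or_ne j k with rfl | hjk
        · exact hxk0
        · have hz := hrest j (Finset.mem_erase.2 ⟨hjk, mem_univ _⟩)
          have hz2 : (x j)^2 = 0 := (div_eq_zero_iff.1 hz).resolve_right (h j)
          exact pow_eq_zero_iff (n := 2) (by norm_num) |>.1 hz2
      · -- T > 0
        have heq : (x k)^2 / lam k * lam k = (x k)^2 := div_mul_cancel₀ _ (h k)
        nlinarith [hcs, heq, hTpos, hkneg, hμlt]
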